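/- Let L₁ be a noncommutative Lie algebra over a field F and let A be a finite-dimensional abelian Lie algebra over F, and let L = L₁ × A be the product Lie algebra. Then the commuting graph Γ(L) is connected if and only if the commuting graph Γ(L₁) is connected, and moreover diam(Γ(L)) = diam(Γ(L₁)) (as elements of ℕ∞). -/

import Mathlib

/-- The product of two Lie rings, with componentwise bracket. -/
instance prodLieRing (L₁ L₂ : Type*) [LieRing L₁] [LieRing L₂] : LieRing (L₁ × L₂) where
  bracket x y := (⁅x.1, y.1⁆, ⁅x.2, y.2⁆)
  add_lie x y z := by ext <;> exact add_lie ..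
  lie_add x y z := by ext <;> exact lie_add ..
  lie_self x := by ext <;> exact lie_self ..
  leibniz_lie x y z := by ext <;> exact leibniz_lie ..

/-- The product of two Lie algebras, with componentwise bracket. -/
instance prodLieAlgebra (F : Type*) [CommRing F] (L₁ L₂ : Type*) [LieRing L₁] [LieRing L₂]
    [LieAlgebra F L₁] [LieAlgebra F L₂] : LieAlgebra F (L₁ × L₂) where
  lie_smul t x y := by ext <;> exact lie_smul ..

/-- The commuting graph of a Lie algebra `L` over `F`: vertices are the elements of
`L` outside the center, and two distinct vertices are adjacent iff they commute. -/
def commutingGraph (F : Type*) [CommRing F] (L : Type*) [LieRing L] [LieAlgebra F L] :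
    SimpleGraph {x : L // x ∉ LieAlgebra.center F L} where
  Adj x y := x ≠ y ∧ ⁅(x : L), (y : L)⁆ = 0
  symm := ⟨fun x y h => ⟨h.1.symm, by rw [← lie_skew, h.2, neg_zero]⟩⟩
  loopless := ⟨fun x h => h.1 rfl⟩

section Aux

variable {F : Type*} [Field F]
    {L₁ : Type*} [LieRing L₁] [LieAlgebra F L₁]
    {A : Type*} [LieRing A] [LieAlgebra F A] [IsLieAbelian A]

omit [IsLieAbelian A] in
lemma prod_bracket_def (u v : L₁ × A) : ⁅u, v⁆ = (⁅u.1, v.1⁆, ⁅u.2, v.2⁆) := rfl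

lemma mem_center_prod (u : L₁ × A) :
    u ∈ LieAlgebra.center F (L₁ × A) ↔ u.1 ∈ LieAlgebra.center F L₁ := by
  simp only [LieAlgebra.center, LieModule.mem_maxTrivSubmodule]
  constructor
  · intro h y
    exact congrArg Prod.fst (h (y, u.2))
  · intro h v
    rw [prod_bracket_def, h v.1, trivial_lie_zero]
    rfl

/-- Vertex of the product graph above a vertex of `Γ(L₁)` with second coordinate `c`. -/
def ιv (x : {x : L₁ // x ∉ LieAlgebra.center F L₁}) (c : A) :
    {u : L₁ × A // u ∉ LieAlgebra.center F (L₁ × A)} :=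
  ⟨(x.1, c), fun h => x.2 ((mem_center_prod _).mp h)⟩

/-- Projection of a vertex of the product graph to a vertex of `Γ(L₁)`. -/
def πv (u : {u : L₁ × A // u ∉ LieAlgebra.center F (L₁ × A)}) :
    {x : L₁ // x ∉ LieAlgebra.center F L₁} :=
  ⟨u.1.1, fun h => u.2 ((mem_center_prod _).mpr h)⟩

lemma ιv_πv (u : {u : L₁ × A // u ∉ LieAlgebra.center F (L₁ × A)}) :
    ιv (πv u) u.1.2 = u := rfl

lemma adj_lift {x z : {x : L₁ // x ∉ LieAlgebra.center F L₁}} (hne : x ≠ z)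
    (hbr : ⁅(x : L₁), (z : L₁)⁆ = 0) (a c : A) :
    (commutingGraph F (L₁ × A)).Adj (ιv x a) (ιv z c) := by
  refine ⟨?_, ?_⟩
  · intro h
    exact hne (Subtype.ext (congrArg (fun u => u.1.1) h))
  · rw [prod_bracket_def]
    show (⁅(x : L₁), (z : L₁)⁆, ⁅a, c⁆) = 0
    rw [hbr, trivial_lie_zero]
    rfl

/-- Lifting a walk in `Γ(L₁)` to the product graph with constant second coordinate. -/
def constLift (c : A) : ∀ {x y : {x : L₁ // x ∉ LieAlgebra.center F L₁}},
    (commutingGraph F L₁).Walk x y → (commutingGraph F (L₁ × A)).Walk (ιv x c) (ιv y c)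
  | _, _, .nil => .nil
  | _, _, .cons h p => .cons (adj_lift h.1 h.2 c c) (constLift c p)

lemma constLift_length (c : A) {x y : {x : L₁ // x ∉ LieAlgebra.center F L₁}}
    (p : (commutingGraph F L₁).Walk x y) : (constLift c p).length = p.length := by
  induction p with
  | nil => rfl
  | cons h p ih => simp [constLift, ih]

/-- Lifting a walk between distinct vertices, with arbitrary second coordinates. -/
def liftWalk {x y : {x : L₁ // x ∉ LieAlgebra.center F L₁}} (a b : A) :
    (p : (commutingGraph F L₁).Walk x y) → x ≠ y →
      (commutingGraph F (L₁ × A)).Walk (ιv x a) (ιv y b)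
  | .nil, h => absurd rfl h
  | .cons hadj p, _ => .cons (adj_lift hadj.1 hadj.2 a b) (constLift b p)

lemma liftWalk_length {x y : {x : L₁ // x ∉ LieAlgebra.center F L₁}} (a b : A)
    (p : (commutingGraph F L₁).Walk x y) (h : x ≠ y) :
    (liftWalk a b p h).length = p.length := by
  cases p with
  | nil => exact absurd rfl h
  | cons hadj p => simp [liftWalk, constLift_length]

lemma proj_walk : ∀ {u v : {u : L₁ × A // u ∉ LieAlgebra.center F (L₁ × A)}}
    (p : (commutingGraph F (L₁ × A)).Walk u v),
    ∃ q : (commutingGraph F L₁).Walk (πv u) (πv v), q.length ≤ p.length := by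
  intro u v p
  induction p with
  | nil => exact ⟨.nil, le_rfl⟩
  | @cons u w v h p ih =>
    obtain ⟨q, hq⟩ := ih
    by_cases he : πv u = πv w
    · exact ⟨q.copy he.symm rfl, by simpa using hq.trans (Nat.le_succ _)⟩
    · have hadj : (commutingGraph F L₁).Adj (πv u) (πv w) := ⟨he, congrArg Prod.fst h.2⟩
      refine ⟨.cons hadj q, by simpa using Nat.succ_le_succ hq⟩

lemma edist_proj (u v : {u : L₁ × A // u ∉ LieAlgebra.center F (L₁ × A)}) :
    (commutingGraph F L₁).edist (πv u) (πv v) ≤ (commutingGraph F (L₁ × A)).edist u v := by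
  by_cases h : (commutingGraph F (L₁ × A)).edist u v = ⊤
  · simp [h]
  · obtain ⟨p, hp⟩ := SimpleGraph.exists_walk_of_edist_ne_top h
    obtain ⟨q, hq⟩ := proj_walk p
    calc (commutingGraph F L₁).edist (πv u) (πv v) ≤ q.length := SimpleGraph.edist_le q
      _ ≤ p.length := by exact_mod_cast hq
      _ = _ := hp

lemma edist_lift (u v : {u : L₁ × A // u ∉ LieAlgebra.center F (L₁ × A)})
    (hne : πv u ≠ πv v) :
    (commutingGraph F (L₁ × A)).edist u v ≤ (commutingGraph F L₁).edist (πv u) (πv v) := by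
  by_cases h : (commutingGraph F L₁).edist (πv u) (πv v) = ⊤
  · simp [h]
  · obtain ⟨p, hp⟩ := SimpleGraph.exists_walk_of_edist_ne_top h
    calc (commutingGraph F (L₁ × A)).edist u v
        ≤ (liftWalk u.1.2 v.1.2 p hne).length := SimpleGraph.edist_le _
      _ = p.length := by rw [liftWalk_length]
      _ = _ := hp

lemma adj_of_fst_eq {u v : {u : L₁ × A // u ∉ LieAlgebra.center F (L₁ × A)}}
    (huv : u ≠ v) (he : u.1.1 = v.1.1) : (commutingGraph F (L₁ × A)).Adj u v := by
  refine ⟨huv, ?_⟩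
  rw [prod_bracket_def]
  show (⁅u.1.1, v.1.1⁆, ⁅u.1.2, v.1.2⁆) = 0
  rw [he, lie_self, trivial_lie_zero]
  rfl

end Aux

/-- if `L₁` is a noncommutative Lie algebra over a field `F` and `A` is a
finite-dimensional abelian Lie algebra over `F`, then the commuting graph of `L₁ × A` is
connected iff that of `L₁` is, and the two commuting graphs have the same diameter. -/
theorem stmt0 (F : Type*) [Field F]
    (L₁ : Type*) [LieRing L₁] [LieAlgebra F L₁]
    (A : Type*) [LieRing A] [LieAlgebra F A] [IsLieAbelian A] [Module.Finite F A]
    (hnc : ∃ x y : L₁, ⁅x, y⁆ ≠ 0) :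
    ((commutingGraph F (L₁ × A)).Connected ↔ (commutingGraph F L₁).Connected) ∧
      (commutingGraph F (L₁ × A)).ediam = (commutingGraph F L₁).ediam := by
  obtain ⟨x₀, y₀, hxy⟩ := hnc
  have hx : x₀ ∉ LieAlgebra.center F L₁ := fun h =>
    hxy (by rw [← lie_skew, (LieModule.mem_maxTrivSubmodule F L₁ L₁ x₀).mp h y₀, neg_zero])
  have hy : y₀ ∉ LieAlgebra.center F L₁ := fun h =>
    hxy ((LieModule.mem_maxTrivSubmodule F L₁ L₁ y₀).mp h x₀)
  set vx : {x : L₁ // x ∉ LieAlgebra.center F L₁} := ⟨x₀, hx⟩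
  set vy : {x : L₁ // x ∉ LieAlgebra.center F L₁} := ⟨y₀, hy⟩
  have hvxy : vx ≠ vy := fun h => hxy (by rw [show x₀ = y₀ from congrArg Subtype.val h, lie_self])
  have h1 : 1 ≤ (commutingGraph F L₁).ediam :=
    le_trans (Order.one_le_iff_pos.mpr (SimpleGraph.edist_pos_of_ne hvxy))
      SimpleGraph.edist_le_ediam
  constructor
  · constructor
    · intro h
      have : Nonempty {x : L₁ // x ∉ LieAlgebra.center F L₁} := ⟨vx⟩
      refine SimpleGraph.Connected.mk fun a b => ?_
      obtain ⟨p⟩ := h.preconnected (ιv a (0 : A)) (ιv b 0)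
      obtain ⟨q, -⟩ := proj_walk p
      exact ⟨q⟩
    · intro h
      have : Nonempty {u : L₁ × A // u ∉ LieAlgebra.center F (L₁ × A)} := ⟨ιv vx (0 : A)⟩
      refine SimpleGraph.Connected.mk fun u v => ?_
      by_cases he : πv u = πv v
      · by_cases huv : u = v
        · exact huv ▸ SimpleGraph.Reachable.refl u
        · exact (adj_of_fst_eq huv (congrArg Subtype.val he)).reachable
      · obtain ⟨p⟩ := h.preconnected (πv u) (πv v)
        exact ⟨liftWalk u.1.2 v.1.2 p he⟩
  · refine le_antisymm ?_ ?_
    · refine SimpleGraph.ediam_le_of_edist_le fun u v => ?_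
      by_cases he : πv u = πv v
      · by_cases huv : u = v
        · subst huv
          simp [SimpleGraph.edist_self]
        · calc (commutingGraph F (L₁ × A)).edist u v = 1 :=
                SimpleGraph.edist_eq_one_iff_adj.mpr (adj_of_fst_eq huv (congrArg Subtype.val he))
            _ ≤ _ := h1
      · exact (edist_lift u v he).trans SimpleGraph.edist_le_ediam
    · refine SimpleGraph.ediam_le_of_edist_le fun a b => ?_
      exact le_trans (edist_proj (ιv a (0 : A)) (ιv b 0)) SimpleGraph.edist_le_ediam
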